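/- Relative accuracy of the compensated Horner algorithm (relation (19)): Let u be a real number with 0 < u, let n be a positive integer with 2n·u < 1, and let P, P̃, r̂, c, ĉ, r̄ be real numbers with P̃ ≥ 0 and P ≠ 0. Suppose that P = r̂ + c, that |ĉ − c| ≤ γ_{2n−1}·γ_{2n}·P̃, and that r̄ = (r̂ + ĉ)·(1+ε) for some ε with |ε| ≤ u. Then |r̄ − P| / |P| ≤ u + γ_{2n}² · (P̃ / |P|). -/
import Mathlib


/-- Relative accuracy of the compensated Horner algorithm (relation (19)).
Here `γ_k = k·u/(1 − k·u)` and `P̃/|P|` is the condition number. -/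
theorem compensated_horner_relative_accuracy
    (u : ℝ) (hu : 0 < u) (n : ℕ) (hn : 1 ≤ n) (h2nu : 2 * (n : ℝ) * u < 1)
    (P Ptilde rhat c chat rbar ε : ℝ) (hPt : 0 ≤ Ptilde) (hP0 : P ≠ 0)
    (hP : P = rhat + c)
    (hc : |chat - c| ≤
      ((2 * (n : ℝ) - 1) * u / (1 - (2 * (n : ℝ) - 1) * u)) *
        (2 * (n : ℝ) * u / (1 - 2 * (n : ℝ) * u)) * Ptilde)
    (hε : |ε| ≤ u)
    (hrbar : rbar = (rhat + chat) * (1 + ε)) :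
    |rbar - P| / |P| ≤ u +
      (2 * (n : ℝ) * u / (1 - 2 * (n : ℝ) * u)) ^ 2 * (Ptilde / |P|) := by
  have hn' : (1 : ℝ) ≤ (n : ℝ) := by exact_mod_cast hn
  set a : ℝ := 2 * (n : ℝ) with ha
  have ha2 : 2 ≤ a := by nlinarith
  have hau : a * u < 1 := h2nu
  have hd2 : 0 < 1 - a * u := by linarith
  have hd1 : 0 < 1 - (a - 1) * u := by nlinarith
  set g1 : ℝ := (a - 1) * u / (1 - (a - 1) * u) with hg1
  set g2 : ℝ := a * u / (1 - a * u) with hg2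
  have hg1nn : 0 ≤ g1 := by
    apply div_nonneg _ hd1.le
    nlinarith
  have hg2nn : 0 ≤ g2 := by
    apply div_nonneg _ hd2.le
    nlinarith
  have hkey : (1 + u) * g1 ≤ g2 := by
    rw [hg1, hg2, ← mul_div_assoc, div_le_div_iff₀ hd1 hd2]
    nlinarith [mul_pos hu hd1, mul_nonneg (mul_nonneg (mul_nonneg (by nlinarith : (0:ℝ) ≤ a * (a - 1)) hu.le) hu.le) hu.le]
  have hεu : |ε| ≤ u := hε
  have hε1 : ε ≤ u := (abs_le.mp hε).2
  have hε2 : -u ≤ ε := (abs_le.mp hε).1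
  have hchat : |chat - c| * (1 + ε) ≤ g2 * g2 * Ptilde := by
    have h1 : |chat - c| * (1 + ε) ≤ (g1 * g2 * Ptilde) * (1 + u) := by
      have hpos : (0:ℝ) ≤ 1 + ε := by nlinarith
      calc |chat - c| * (1 + ε) ≤ (g1 * g2 * Ptilde) * (1 + ε) := by
            apply mul_le_mul_of_nonneg_right hc hpos
        _ ≤ (g1 * g2 * Ptilde) * (1 + u) := by
            apply mul_le_mul_of_nonneg_left (by linarith)
            positivity
    calc |chat - c| * (1 + ε) ≤ (g1 * g2 * Ptilde) * (1 + u) := h1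
      _ = ((1 + u) * g1) * (g2 * Ptilde) := by ring
      _ ≤ g2 * (g2 * Ptilde) := by
          apply mul_le_mul_of_nonneg_right hkey (by positivity)
      _ = g2 * g2 * Ptilde := by ring
  have hmain : |rbar - P| ≤ u * |P| + g2 ^ 2 * Ptilde := by
    have heq : rbar - P = ε * P + (chat - c) * (1 + ε) := by
      rw [hrbar, hP]; ring
    calc |rbar - P| = |ε * P + (chat - c) * (1 + ε)| := by rw [heq]
      _ ≤ |ε * P| + |(chat - c) * (1 + ε)| := abs_add_le _ _
      _ = |ε| * |P| + |chat - c| * |1 + ε| := by rw [abs_mul, abs_mul]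
      _ ≤ u * |P| + |chat - c| * (1 + ε) := by
          have : |1 + ε| = 1 + ε := abs_of_nonneg (by nlinarith)
          rw [this]
          have := mul_le_mul_of_nonneg_right hεu (abs_nonneg P)
          linarith
      _ ≤ u * |P| + g2 ^ 2 * Ptilde := by
          have := hchat; nlinarith
  have hPabs : 0 < |P| := abs_pos.mpr hP0
  rw [div_le_iff₀ hPabs]
  have : (u + g2 ^ 2 * (Ptilde / |P|)) * |P| = u * |P| + g2 ^ 2 * Ptilde := by
    field_simp
  rw [this]
  exact hmain
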